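/- For a q-form α and a p-form β with q ≤ p, the Clifford product expands as αβ = Σ_{n=0}^{q} ((-1)^{n(q-n)+⌊n/2⌋}/n!) α∧ₙβ, and βα = (-1)^{pq} Σ_{n=0}^{q} ((-1)^{n(q-n+1)+⌊n/2⌋}/n!) α∧ₙβ. -/

import Mathlib

noncomputable section
open CliffordAlgebra

variable {V : Type*} [AddCommGroup V] [Module ℝ V]

/-- The Clifford product (with respect to the quadratic form `Q`, the metric)
transported to the exterior algebra via `CliffordAlgebra.equivExterior`. -/
def cliffMul (Q : QuadraticForm ℝ V) (α β : ExteriorAlgebra ℝ V) : ExteriorAlgebra ℝ V :=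
  equivExterior Q ((equivExterior Q).symm α * (equivExterior Q).symm β)

/-- The submodule of `p`-forms: the `p`-th exterior power inside the exterior algebra. -/
def formGrade (p : ℕ) : Submodule ℝ (ExteriorAlgebra ℝ V) :=
  LinearMap.range (ExteriorAlgebra.ι ℝ : V →ₗ[ℝ] ExteriorAlgebra ℝ V) ^ p

/-- Interior contraction `v⌟ ·` of a form by the vector `v`, using the metric
(through the symmetric bilinear form associated to `Q`). -/
def contr (Q : QuadraticForm ℝ V) (v : V) :
    ExteriorAlgebra ℝ V →ₗ[ℝ] ExteriorAlgebra ℝ V :=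
  contractLeft (Q := (0 : QuadraticForm ℝ V)) (QuadraticMap.associated (R := ℝ) Q v)

variable {ι : Type*} [Fintype ι] [DecidableEq ι]

/-- The `n`-fold contracted wedge product `α∧ₙβ`, defined inductively by
`α∧₀β = α∧β` and `α∧ₙβ = (Xₐ⌟α)∧_{n-1}(X^a⌟β)` (sum over `a`), where `Xl`/`Xu`
are a dual pair of orthonormal frames. -/
def cwedge (Q : QuadraticForm ℝ V) (Xl Xu : ι → V) :
    ℕ → ExteriorAlgebra ℝ V → ExteriorAlgebra ℝ V → ExteriorAlgebra ℝ V
  | 0, α, β => α * β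
  | n + 1, α, β => ∑ a, cwedge Q Xl Xu n (contr Q (Xl a) α) (contr Q (Xu a) β)

/-- `Xl` and `Xu` are mutually dual frames for the metric. -/
def DualFrames (Q : QuadraticForm ℝ V) (Xl Xu : ι → V) : Prop :=
  (∀ i j, QuadraticMap.associated (R := ℝ) Q (Xl i) (Xu j) = if i = j then 1 else 0) ∧
  (∀ w : V, ∑ a, (QuadraticMap.associated (R := ℝ) Q w (Xu a)) • Xl a = w) ∧
  (∀ w : V, ∑ a, (QuadraticMap.associated (R := ℝ) Q w (Xl a)) • Xu a = w)

set_option linter.unusedSectionVars false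

section machinery

-- abbreviation for the bilinear form
local notation "B" => QuadraticMap.associated (R := ℝ)

section basic
variable (Q : QuadraticForm ℝ V)

lemma contr_ι_mul (v w : V) (x : ExteriorAlgebra ℝ V) :
    contr Q v (ExteriorAlgebra.ι ℝ w * x)
      = (B Q v w) • x - ExteriorAlgebra.ι ℝ w * contr Q v x :=
  contractLeft_ι_mul (Q := (0:QuadraticForm ℝ V)) _ _ _

lemma contr_algebraMap (v : V) (r : ℝ) :
    contr Q v (algebraMap ℝ (ExteriorAlgebra ℝ V) r) = 0 :=
  contractLeft_algebraMap (Q := (0:QuadraticForm ℝ V)) _ _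

lemma contr_contr (v w : V) (x : ExteriorAlgebra ℝ V) :
    contr Q v (contr Q w x) = - contr Q w (contr Q v x) :=
  contractLeft_comm _ _ _

lemma contr_grade {k : ℕ} (v : V) :
    ∀ x ∈ formGrade (V := V) (k + 1), contr Q v x ∈ formGrade k := by
  induction k with
  | zero =>
    intro x hx
    rw [formGrade, pow_one] at hx
    obtain ⟨w, rfl⟩ := hx
    rw [show (ExteriorAlgebra.ι ℝ w : ExteriorAlgebra ℝ V) = ExteriorAlgebra.ι ℝ w * 1 by
      rw [mul_one]]
    rw [contr_ι_mul]
    rw [show contr Q v (1 : ExteriorAlgebra ℝ V) = 0 by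
      simpa using contr_algebraMap Q v 1]
    rw [mul_zero, sub_zero]
    exact Submodule.smul_mem _ _ (by
      rw [formGrade, pow_zero]
      exact Submodule.mem_one.mpr ⟨1, map_one _⟩)
  | succ k ih =>
    intro x hx
    rw [formGrade, pow_succ'] at hx
    refine Submodule.mul_induction_on hx ?_ ?_
    · rintro m ⟨w, rfl⟩ y hy
      have hy' : y ∈ formGrade (V := V) (k + 1) := by rw [formGrade]; exact hy
      rw [contr_ι_mul]
      refine Submodule.sub_mem _ (Submodule.smul_mem _ _ hy') ?_
      rw [formGrade, pow_succ']
      exact Submodule.mul_mem_mul (LinearMap.mem_range_self _ w)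
        (by have := ih y hy'; rw [formGrade] at this; exact this)
    · intro x y hx hy; rw [map_add]; exact Submodule.add_mem _ hx hy

lemma contr_grade_zero (v : V) : ∀ x ∈ formGrade (V := V) 0, contr Q v x = 0 := by
  intro x hx
  rw [formGrade, pow_zero, Submodule.mem_one] at hx
  obtain ⟨r, rfl⟩ := hx
  exact contr_algebraMap Q v r

lemma mul_mem_grade {a b : ℕ} {x y : ExteriorAlgebra ℝ V}
    (hx : x ∈ formGrade a) (hy : y ∈ formGrade b) : x * y ∈ formGrade (a + b) := by
  rw [formGrade, pow_add]
  exact Submodule.mul_mem_mul hx hy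

lemma contr_linear (v w : V) (c d : ℝ) (x : ExteriorAlgebra ℝ V) :
    contr Q (c • v + d • w) x = c • contr Q v x + d • contr Q w x := by
  simp only [contr, map_add, map_smul, LinearMap.map_add₂, LinearMap.map_smul₂,
    LinearMap.add_apply, LinearMap.smul_apply]

end basic


section cw
variable (Q : QuadraticForm ℝ V) (Xl Xu : ι → V)

lemma cwedge_zero (α β : ExteriorAlgebra ℝ V) : cwedge Q Xl Xu 0 α β = α * β := rfl

lemma cwedge_succ (n : ℕ) (α β : ExteriorAlgebra ℝ V) :
    cwedge Q Xl Xu (n + 1) α β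
      = ∑ a, cwedge Q Xl Xu n (contr Q (Xl a) α) (contr Q (Xu a) β) := rfl

lemma cwedge_add_left (n : ℕ) (α α' β : ExteriorAlgebra ℝ V) :
    cwedge Q Xl Xu n (α + α') β = cwedge Q Xl Xu n α β + cwedge Q Xl Xu n α' β := by
  induction n generalizing α α' β with
  | zero => simp [cwedge_zero, add_mul]
  | succ n ih => simp [cwedge_succ, map_add, ih, Finset.sum_add_distrib]

lemma cwedge_smul_left (n : ℕ) (c : ℝ) (α β : ExteriorAlgebra ℝ V) :
    cwedge Q Xl Xu n (c • α) β = c • cwedge Q Xl Xu n α β := by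
  induction n generalizing α β with
  | zero => simp [cwedge_zero, smul_mul_assoc]
  | succ n ih => simp [cwedge_succ, map_smul, ih, Finset.smul_sum]

lemma cwedge_add_right (n : ℕ) (α β β' : ExteriorAlgebra ℝ V) :
    cwedge Q Xl Xu n α (β + β') = cwedge Q Xl Xu n α β + cwedge Q Xl Xu n α β' := by
  induction n generalizing α β β' with
  | zero => simp [cwedge_zero, mul_add]
  | succ n ih => simp [cwedge_succ, map_add, ih, Finset.sum_add_distrib]

lemma cwedge_smul_right (n : ℕ) (c : ℝ) (α β : ExteriorAlgebra ℝ V) :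
    cwedge Q Xl Xu n α (c • β) = c • cwedge Q Xl Xu n α β := by
  induction n generalizing α β with
  | zero => simp [cwedge_zero, mul_smul_comm]
  | succ n ih => simp [cwedge_succ, map_smul, ih, Finset.smul_sum]

lemma cwedge_zero_left (n : ℕ) (β : ExteriorAlgebra ℝ V) :
    cwedge Q Xl Xu n 0 β = 0 := by
  have := cwedge_smul_left Q Xl Xu n 0 0 β
  simpa using this

lemma cwedge_zero_right (n : ℕ) (α : ExteriorAlgebra ℝ V) :
    cwedge Q Xl Xu n α 0 = 0 := by
  have := cwedge_smul_right Q Xl Xu n 0 α 0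
  simpa using this

lemma cwedge_sum_right {γ : Type*} (s : Finset γ) (n : ℕ)
    (α : ExteriorAlgebra ℝ V) (f : γ → ExteriorAlgebra ℝ V) :
    cwedge Q Xl Xu n α (∑ i ∈ s, f i) = ∑ i ∈ s, cwedge Q Xl Xu n α (f i) := by
  classical
  induction s using Finset.induction_on with
  | empty => simp [cwedge_zero_right]
  | insert _ _ h ih => rw [Finset.sum_insert h, Finset.sum_insert h, cwedge_add_right, ih]

lemma cwedge_neg_right (n : ℕ) (α β : ExteriorAlgebra ℝ V) :
    cwedge Q Xl Xu n α (-β) = - cwedge Q Xl Xu n α β := by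
  have := cwedge_smul_right Q Xl Xu n (-1) α β
  simpa using this

/-- contracting more times than the grade gives zero -/
lemma cwedge_eq_zero (n : ℕ) : ∀ k < n, ∀ α ∈ formGrade (V := V) k,
    ∀ β, cwedge Q Xl Xu n α β = 0 := by
  induction n with
  | zero => omega
  | succ n ih =>
    intro k hk α hα β
    rw [cwedge_succ]
    refine Finset.sum_eq_zero fun a _ => ?_
    match k, hα with
    | 0, hα => rw [contr_grade_zero Q _ _ hα, cwedge_zero_left]
    | (k + 1), hα => exact ih k (by omega) _ (contr_grade Q _ _ hα) _

lemma cwedge_mem_grade (n : ℕ) : ∀ a b : ℕ, ∀ α ∈ formGrade (V := V) (a + n),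
    ∀ β ∈ formGrade (V := V) (b + n), cwedge Q Xl Xu n α β ∈ formGrade (a + b) := by
  induction n with
  | zero =>
    intro a b α hα β hβ
    rw [cwedge_zero]
    exact mul_mem_grade (by simpa using hα) (by simpa using hβ)
  | succ n ih =>
    intro a b α hα β hβ
    rw [cwedge_succ]
    refine Submodule.sum_mem _ fun i _ => ?_
    exact ih a b _ (contr_grade Q _ _ (by rwa [Nat.add_succ] at hα)) _
      (contr_grade Q _ _ (by rwa [Nat.add_succ] at hβ))

/-- key frame identity: `∑ₐ B(Xl a, v) • (Xu a ⌟ β) = v ⌟ β`. -/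
lemma assoc_symm (w u : V) : QuadraticMap.associated (R := ℝ) Q w u
    = QuadraticMap.associated (R := ℝ) Q u w := by
  simpa using (QuadraticMap.associated_isSymm ℝ Q u w).symm

lemma frame_contr (hX : DualFrames Q Xl Xu) (v : V) (β : ExteriorAlgebra ℝ V) :
    ∑ a, (QuadraticMap.associated (R := ℝ) Q (Xl a) v) • contr Q (Xu a) β
      = contr Q v β := by
  set F : V →ₗ[ℝ] ExteriorAlgebra ℝ V :=
    ((CliffordAlgebra.contractLeft (Q := (0 : QuadraticForm ℝ V))).flip β).comp
      (QuadraticMap.associated (R := ℝ) Q) with hF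
  have hFv : ∀ w : V, F w = contr Q w β := fun w => rfl
  calc ∑ a, (QuadraticMap.associated (R := ℝ) Q (Xl a) v) • contr Q (Xu a) β
      = ∑ a, (QuadraticMap.associated (R := ℝ) Q v (Xl a)) • F (Xu a) := by
        refine Finset.sum_congr rfl fun a _ => ?_
        rw [hFv, assoc_symm Q (Xl a) v]
    _ = F (∑ a, (QuadraticMap.associated (R := ℝ) Q v (Xl a)) • Xu a) := by
        rw [map_sum]
        exact Finset.sum_congr rfl fun a _ => (map_smul F _ _).symm
    _ = contr Q v β := by rw [hX.2.2 v, hFv]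

end cw


section keylemmas
variable (Q : QuadraticForm ℝ V) (Xl Xu : ι → V)

lemma cwedge_neg_left (n : ℕ) (α β : ExteriorAlgebra ℝ V) :
    cwedge Q Xl Xu n (-α) β = - cwedge Q Xl Xu n α β := by
  have := cwedge_smul_left Q Xl Xu n (-1) α β
  simpa using this

lemma cwedge_sub_left (n : ℕ) (α α' β : ExteriorAlgebra ℝ V) :
    cwedge Q Xl Xu n (α - α') β = cwedge Q Xl Xu n α β - cwedge Q Xl Xu n α' β := by
  rw [sub_eq_add_neg, cwedge_add_left, cwedge_neg_left, ← sub_eq_add_neg]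

/-- interior contraction is an antiderivation -/
lemma contr_mul (v : V) : ∀ k, ∀ x ∈ formGrade (V := V) k, ∀ y,
    contr Q v (x * y) = contr Q v x * y + ((-1 : ℝ)) ^ k • (x * contr Q v y) := by
  intro k
  induction k with
  | zero =>
    intro x hx y
    rw [formGrade, pow_zero, Submodule.mem_one] at hx
    obtain ⟨r, rfl⟩ := hx
    rw [contr_algebraMap, zero_mul, zero_add, pow_zero, one_smul, ← Algebra.smul_def,
      map_smul, Algebra.smul_def]
  | succ k ih =>
    intro x hx y
    rw [formGrade, pow_succ'] at hx
    refine Submodule.mul_induction_on hx ?_ ?_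
    · rintro m ⟨w, rfl⟩ x' hx'
      have hx'' : x' ∈ formGrade (V := V) k := by rw [formGrade]; exact hx'
      rw [mul_assoc, contr_ι_mul, ih x' hx'' y, contr_ι_mul]
      simp only [mul_add, add_mul, sub_mul, smul_mul_assoc, mul_smul_comm, pow_succ,
        mul_smul, neg_one_smul, mul_assoc, smul_sub, smul_neg, neg_smul, one_smul]
      abel
    · intro x₁ x₂ h₁ h₂
      rw [add_mul, map_add, h₁, h₂, map_add, add_mul,
        show (x₁ + x₂) * contr Q v y = x₁ * contr Q v y + x₂ * contr Q v y from add_mul _ _ _,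
        smul_add]
      abel

/-- Lemma A, base -/
lemma cwedge_wedge_zero (v : V) (α' β : ExteriorAlgebra ℝ V) :
    cwedge Q Xl Xu 0 (ExteriorAlgebra.ι ℝ v * α') β
    = ExteriorAlgebra.ι ℝ v * cwedge Q Xl Xu 0 α' β := by
  rw [cwedge_zero, cwedge_zero, mul_assoc]

/-- Lemma A -/
lemma cwedge_wedge (hX : DualFrames Q Xl Xu) (v : V) :
    ∀ n (α' β : ExteriorAlgebra ℝ V),
    cwedge Q Xl Xu (n + 1) (ExteriorAlgebra.ι ℝ v * α') β
    = ((-1 : ℝ)) ^ (n + 1) • (ExteriorAlgebra.ι ℝ v * cwedge Q Xl Xu (n + 1) α' β)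
      + (((n : ℝ)) + 1) • cwedge Q Xl Xu n α' (contr Q v β) := by
  intro n
  induction n with
  | zero =>
    intro α' β
    rw [cwedge_succ]
    have step : ∀ a : ι, cwedge Q Xl Xu 0 (contr Q (Xl a) (ExteriorAlgebra.ι ℝ v * α'))
        (contr Q (Xu a) β)
        = (QuadraticMap.associated (R := ℝ) Q (Xl a) v) • (α' * contr Q (Xu a) β)
          - ExteriorAlgebra.ι ℝ v * (contr Q (Xl a) α' * contr Q (Xu a) β) := by
      intro a
      rw [contr_ι_mul, cwedge_sub_left, cwedge_smul_left, cwedge_zero, cwedge_zero,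
        mul_assoc]
    rw [Finset.sum_congr rfl fun a _ => step a, Finset.sum_sub_distrib, ← Finset.mul_sum]
    have h1 : ∑ a, (QuadraticMap.associated (R := ℝ) Q (Xl a) v) • (α' * contr Q (Xu a) β)
        = α' * contr Q v β := by
      rw [← frame_contr Q Xl Xu hX v β, Finset.mul_sum]
      exact Finset.sum_congr rfl fun a _ => (mul_smul_comm _ _ _).symm
    rw [h1]
    have h2 : (∑ a, contr Q (Xl a) α' * contr Q (Xu a) β) = cwedge Q Xl Xu 1 α' β := by
      rw [cwedge_succ]; rfl
    rw [h2, cwedge_zero]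
    have : ((0 : ℕ) : ℝ) + 1 = 1 := by norm_num
    rw [this, one_smul, pow_one, neg_one_smul]
    abel
  | succ n ih =>
    intro α' β
    rw [cwedge_succ]
    have step : ∀ a : ι, cwedge Q Xl Xu (n + 1)
          (contr Q (Xl a) (ExteriorAlgebra.ι ℝ v * α')) (contr Q (Xu a) β)
        = (QuadraticMap.associated (R := ℝ) Q (Xl a) v) •
              cwedge Q Xl Xu (n + 1) α' (contr Q (Xu a) β)
          - ((-1 : ℝ)) ^ (n + 1) • (ExteriorAlgebra.ι ℝ v *
              cwedge Q Xl Xu (n + 1) (contr Q (Xl a) α') (contr Q (Xu a) β))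
          + (((n : ℝ)) + 1) • cwedge Q Xl Xu n (contr Q (Xl a) α')
              (contr Q (Xu a) (contr Q v β)) := by
      intro a
      rw [contr_ι_mul, cwedge_sub_left, cwedge_smul_left, ih,
        show contr Q v (contr Q (Xu a) β) = - contr Q (Xu a) (contr Q v β) from
          contr_contr Q v (Xu a) β,
        cwedge_neg_right]
      simp only [smul_neg]
      abel
    rw [Finset.sum_congr rfl fun a _ => step a]
    rw [Finset.sum_add_distrib, Finset.sum_sub_distrib]
    have h1 : ∑ a, (QuadraticMap.associated (R := ℝ) Q (Xl a) v) •
        cwedge Q Xl Xu (n + 1) α' (contr Q (Xu a) β)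
        = cwedge Q Xl Xu (n + 1) α' (contr Q v β) := by
      rw [← frame_contr Q Xl Xu hX v β, cwedge_sum_right]
      exact Finset.sum_congr rfl fun a _ => (cwedge_smul_right Q Xl Xu _ _ _ _).symm
    have h2 : ∑ a, ((-1 : ℝ)) ^ (n + 1) • (ExteriorAlgebra.ι ℝ v *
          cwedge Q Xl Xu (n + 1) (contr Q (Xl a) α') (contr Q (Xu a) β))
        = ((-1 : ℝ)) ^ (n + 1) • (ExteriorAlgebra.ι ℝ v *
            cwedge Q Xl Xu (n + 2) α' β) := by
      rw [← Finset.smul_sum, ← Finset.mul_sum, ← cwedge_succ]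
    have h3 : ∑ a, (((n : ℝ)) + 1) • cwedge Q Xl Xu n (contr Q (Xl a) α')
          (contr Q (Xu a) (contr Q v β))
        = (((n : ℝ)) + 1) • cwedge Q Xl Xu (n + 1) α' (contr Q v β) := by
      rw [← Finset.smul_sum, ← cwedge_succ]
    rw [h1, h2, h3, show n + 1 + 1 = n + 2 from rfl]
    have hc : (((n : ℕ) + 1 : ℕ) : ℝ) = ((n : ℝ) + 1) := by push_cast; ring
    rw [hc]
    module

end keylemmas


section lemb
variable (Q : QuadraticForm ℝ V) (Xl Xu : ι → V)

/-- Lemma B: contraction of a contracted wedge product -/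
lemma contr_cwedge (v : V) : ∀ n k, ∀ α' ∈ formGrade (V := V) k,
    ∀ β, contr Q v (cwedge Q Xl Xu n α' β)
      = ((-1 : ℝ)) ^ n • cwedge Q Xl Xu n (contr Q v α') β
        + ((-1 : ℝ)) ^ k • cwedge Q Xl Xu n α' (contr Q v β) := by
  intro n
  induction n with
  | zero =>
    intro k α' hα' β
    rw [cwedge_zero, cwedge_zero, cwedge_zero, pow_zero, one_smul,
      contr_mul Q v k α' hα' β]
  | succ n ih =>
    intro k
    match k with
    | 0 =>
      intro α' hα' β
      rw [cwedge_eq_zero Q Xl Xu (n + 1) 0 (Nat.succ_pos n) α' hα' β, map_zero,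
        contr_grade_zero Q v α' hα', cwedge_zero_left,
        cwedge_eq_zero Q Xl Xu (n + 1) 0 (Nat.succ_pos n) α' hα' (contr Q v β),
        smul_zero, smul_zero, add_zero]
    | (k + 1) =>
      intro α' hα' β
      rw [cwedge_succ, map_sum]
      have step : ∀ a : ι, contr Q v (cwedge Q Xl Xu n (contr Q (Xl a) α')
            (contr Q (Xu a) β))
          = - (((-1 : ℝ)) ^ n • cwedge Q Xl Xu n (contr Q (Xl a) (contr Q v α'))
              (contr Q (Xu a) β))
            - ((-1 : ℝ)) ^ k • cwedge Q Xl Xu n (contr Q (Xl a) α')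
              (contr Q (Xu a) (contr Q v β)) := by
        intro a
        rw [ih k _ (contr_grade Q (Xl a) α' hα') _,
          show contr Q v (contr Q (Xl a) α') = - contr Q (Xl a) (contr Q v α') from
            contr_contr Q v (Xl a) α',
          show contr Q v (contr Q (Xu a) β) = - contr Q (Xu a) (contr Q v β) from
            contr_contr Q v (Xu a) β,
          cwedge_neg_left, cwedge_neg_right]
        simp only [smul_neg]
        abel
      rw [Finset.sum_congr rfl fun a _ => step a, Finset.sum_sub_distrib,
        Finset.sum_neg_distrib, ← Finset.smul_sum, ← Finset.smul_sum,
        ← cwedge_succ, ← cwedge_succ]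
      have h1 : ((-1 : ℝ)) ^ (n + 1) = -((-1 : ℝ)) ^ n := by rw [pow_succ]; ring
      have h2 : ((-1 : ℝ)) ^ (k + 1) = -((-1 : ℝ)) ^ k := by rw [pow_succ]; ring
      rw [h1, h2]
      module

end lemb


section transport
variable (Q : QuadraticForm ℝ V)

lemma equivExterior_apply (x : CliffordAlgebra Q) :
    equivExterior Q x = changeForm changeForm.associated_neg_proof x := rfl

lemma assoc_neg (v : V) : QuadraticMap.associated (R := ℝ) (-Q) v
    = - QuadraticMap.associated (R := ℝ) Q v := by
  rw [map_neg, LinearMap.neg_apply]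

lemma contractLeft_assoc_neg (v : V) (y : ExteriorAlgebra ℝ V) :
    CliffordAlgebra.contractLeft (Q := (0 : QuadraticForm ℝ V))
      (QuadraticMap.associated (R := ℝ) (-Q) v) y = - contr Q v y := by
  rw [assoc_neg, map_neg, LinearMap.neg_apply, contr]

/-- transport of left multiplication by a vector, Clifford → exterior -/
lemma equivExterior_ι_mul (v : V) (x : CliffordAlgebra Q) :
    equivExterior Q (CliffordAlgebra.ι Q v * x)
      = ExteriorAlgebra.ι ℝ v * equivExterior Q x + contr Q v (equivExterior Q x) := by
  rw [equivExterior_apply, equivExterior_apply, changeForm_ι_mul, contractLeft_assoc_neg,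
    sub_neg_eq_add]

/-- transport of left wedge by a vector, exterior → Clifford -/
lemma symm_wedge (v : V) (ω : ExteriorAlgebra ℝ V) :
    (equivExterior Q).symm (ExteriorAlgebra.ι ℝ v * ω)
      = CliffordAlgebra.ι Q v * (equivExterior Q).symm ω
        - (equivExterior Q).symm (contr Q v ω) := by
  have h := equivExterior_ι_mul Q v ((equivExterior Q).symm ω)
  rw [LinearEquiv.apply_symm_apply] at h
  have h2 := congrArg (equivExterior Q).symm h
  rw [LinearEquiv.symm_apply_apply, map_add] at h2
  rw [h2]
  abel

/-- transport of contraction -/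
lemma symm_contr (v : V) (ω : ExteriorAlgebra ℝ V) :
    (equivExterior Q).symm (contr Q v ω)
      = contractLeft (QuadraticMap.associated (R := ℝ) Q v) ((equivExterior Q).symm ω) := by
  have h : equivExterior Q (contractLeft (QuadraticMap.associated (R := ℝ) Q v)
      ((equivExterior Q).symm ω)) = contr Q v ω := by
    rw [equivExterior_apply, changeForm_contractLeft]
    conv_rhs => rw [← LinearEquiv.apply_symm_apply (equivExterior Q) ω]
    rfl
  conv_lhs => rw [← h]
  rw [LinearEquiv.symm_apply_apply]

lemma polar_eq_two_mul_assoc (v w : V) :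
    QuadraticMap.polar Q v w = 2 * QuadraticMap.associated (R := ℝ) Q v w := by
  have h := QuadraticMap.two_nsmul_associated ℝ Q
  rw [← QuadraticMap.polarBilin_apply_apply, ← h]
  simp [nsmul_eq_mul, QuadraticMap.polar]
  simp [QuadraticMap.associated_apply, invOf_eq_inv]

/-- vector multiplication vs involution in the Clifford algebra -/
lemma ι_mul_involute (v : V) (x : CliffordAlgebra Q) :
    CliffordAlgebra.ι Q v * x
      = involute x * CliffordAlgebra.ι Q v
        + (2 : ℝ) • contractLeft (QuadraticMap.associated (R := ℝ) Q v) x := by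
  induction x using CliffordAlgebra.left_induction with
  | algebraMap r =>
    rw [contractLeft_algebraMap, smul_zero, add_zero]
    simp [Algebra.commutes]
  | add x y hx hy =>
    rw [mul_add, hx, hy, map_add, add_mul, map_add, smul_add]
    abel
  | ι_mul x w hx =>
    have hswap : CliffordAlgebra.ι Q v * CliffordAlgebra.ι Q w
        = algebraMap ℝ _ (QuadraticMap.polar Q v w)
          - CliffordAlgebra.ι Q w * CliffordAlgebra.ι Q v :=
      eq_sub_of_add_eq (ι_mul_ι_add_swap v w)
    rw [← mul_assoc, hswap, sub_mul, mul_assoc, hx, map_mul, involute_ι,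
      contractLeft_ι_mul, ← Algebra.smul_def, polar_eq_two_mul_assoc, mul_smul, smul_sub]
    simp only [mul_add, neg_mul, mul_smul_comm, smul_sub, neg_smul, add_mul, smul_mul_assoc,
      mul_assoc]
    abel

/-- parity of the Clifford image of a `p`-form -/
lemma symm_mem_evenOdd : ∀ p : ℕ, ∀ β ∈ formGrade (V := V) p,
    (equivExterior Q).symm β ∈ evenOdd Q ((p : ZMod 2)) := by
  intro p
  induction p using Nat.strong_induction_on with
  | _ p ih =>
    match p with
    | 0 =>
      intro β hβ
      rw [formGrade, pow_zero, Submodule.mem_one] at hβ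
      obtain ⟨r, rfl⟩ := hβ
      have hs : ((equivExterior Q).symm (algebraMap ℝ _ r) : CliffordAlgebra Q)
          = algebraMap ℝ _ r := by
        have : equivExterior Q (algebraMap ℝ _ r) = algebraMap ℝ _ r := by
          rw [equivExterior_apply, changeForm_algebraMap]
        rw [← this, LinearEquiv.symm_apply_apply]
      rw [hs, Nat.cast_zero]
      exact one_le_evenOdd_zero Q (Submodule.mem_one.mpr ⟨r, rfl⟩)
    | (p + 1) =>
      intro β hβ
      rw [formGrade, pow_succ'] at hβ
      refine Submodule.mul_induction_on hβ ?_ ?_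
      · rintro m ⟨w, rfl⟩ β' hβ'
        have hβ'' : β' ∈ formGrade (V := V) p := by rw [formGrade]; exact hβ'
        rw [symm_wedge]
        refine Submodule.sub_mem _ ?_ ?_
        · have h1 : CliffordAlgebra.ι Q w ∈ evenOdd Q 1 := ι_mem_evenOdd_one Q w
          have h2 := ih p (Nat.lt_succ_self p) β' hβ''
          have h3 := evenOdd_mul_le Q 1 (p : ZMod 2) (Submodule.mul_mem_mul h1 h2)
          have : ((1 : ZMod 2) + (p : ZMod 2)) = (((p + 1 : ℕ)) : ZMod 2) := by
            push_cast; ring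
          rwa [this] at h3
        · match p, hβ'' with
          | 0, hβ'' =>
            rw [contr_grade_zero Q w β' hβ'', map_zero]
            exact Submodule.zero_mem _
          | (p + 1), hβ'' =>
            have h2 := ih p (by omega) _ (contr_grade Q w β' hβ'')
            have hcast : (((p + 1 + 1 : ℕ)) : ZMod 2) = ((p : ℕ) : ZMod 2) := by
              have h4 : (p + 1 + 1 : ℕ) = p + 2 := by omega
              rw [h4, Nat.cast_add, ZMod.natCast_self, add_zero]
            rwa [← hcast] at h2
      · intro x y hx hy
        rw [map_add]; exact Submodule.add_mem _ hx hy

end transport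


section cliffmul
variable (Q : QuadraticForm ℝ V)

lemma involute_symm (p : ℕ) (β : ExteriorAlgebra ℝ V) (hβ : β ∈ formGrade p) :
    involute ((equivExterior Q).symm β) = ((-1 : ℝ)) ^ p • (equivExterior Q).symm β := by
  have hmem := symm_mem_evenOdd Q p β hβ
  rcases Nat.even_or_odd p with he | ho
  · have h0 : ((p : ℕ) : ZMod 2) = 0 := by
      rw [ZMod.natCast_eq_zero_iff]
      exact he.two_dvd
    rw [h0] at hmem
    rw [involute_eq_of_mem_even hmem, he.neg_one_pow, one_smul]
  · have h1 : ((p : ℕ) : ZMod 2) = 1 := by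
      rw [← ZMod.natCast_mod, Nat.odd_iff.mp ho, Nat.cast_one]
    rw [h1] at hmem
    rw [involute_eq_of_mem_odd hmem, ho.neg_one_pow, neg_smul, one_smul]

lemma symm_algebraMap (r : ℝ) :
    ((equivExterior Q).symm (algebraMap ℝ (ExteriorAlgebra ℝ V) r) : CliffordAlgebra Q)
      = algebraMap ℝ _ r := by
  have : equivExterior Q (algebraMap ℝ _ r) = algebraMap ℝ _ r := by
    rw [equivExterior_apply, changeForm_algebraMap]
  rw [← this, LinearEquiv.symm_apply_apply]

lemma cliffMul_add_left (α₁ α₂ β : ExteriorAlgebra ℝ V) :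
    cliffMul Q (α₁ + α₂) β = cliffMul Q α₁ β + cliffMul Q α₂ β := by
  simp [cliffMul, add_mul]

lemma cliffMul_smul_left (c : ℝ) (α β : ExteriorAlgebra ℝ V) :
    cliffMul Q (c • α) β = c • cliffMul Q α β := by
  simp [cliffMul, smul_mul_assoc]

lemma cliffMul_add_right (α β₁ β₂ : ExteriorAlgebra ℝ V) :
    cliffMul Q α (β₁ + β₂) = cliffMul Q α β₁ + cliffMul Q α β₂ := by
  simp [cliffMul, mul_add]

lemma cliffMul_smul_right (c : ℝ) (α β : ExteriorAlgebra ℝ V) :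
    cliffMul Q α (c • β) = c • cliffMul Q α β := by
  simp [cliffMul, mul_smul_comm]

lemma cliffMul_zero_left (β : ExteriorAlgebra ℝ V) : cliffMul Q 0 β = 0 := by
  simp [cliffMul]

lemma cliffMul_zero_right (α : ExteriorAlgebra ℝ V) : cliffMul Q α 0 = 0 := by
  simp [cliffMul]

lemma cliffMul_algebraMap_left (r : ℝ) (β : ExteriorAlgebra ℝ V) :
    cliffMul Q (algebraMap ℝ _ r) β = r • β := by
  rw [cliffMul, symm_algebraMap, ← Algebra.smul_def, map_smul, LinearEquiv.apply_symm_apply]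

lemma cliffMul_algebraMap_right (r : ℝ) (β : ExteriorAlgebra ℝ V) :
    cliffMul Q β (algebraMap ℝ _ r) = r • β := by
  rw [cliffMul, symm_algebraMap, ← Algebra.commutes, ← Algebra.smul_def, map_smul,
    LinearEquiv.apply_symm_apply]

/-- recursion for the Clifford product with a wedge on the left -/
lemma cliffMul_wedge_left (v : V) (α' β : ExteriorAlgebra ℝ V) :
    cliffMul Q (ExteriorAlgebra.ι ℝ v * α') β
      = ExteriorAlgebra.ι ℝ v * cliffMul Q α' β + contr Q v (cliffMul Q α' β)
        - cliffMul Q (contr Q v α') β := by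
  rw [cliffMul, symm_wedge, sub_mul, map_sub, mul_assoc, equivExterior_ι_mul,
    cliffMul, cliffMul]

/-- the key commutation: `(p`-form`) * vector` in Clifford form -/
lemma symm_mul_ι (p : ℕ) (β : ExteriorAlgebra ℝ V) (hβ : β ∈ formGrade p) (v : V) :
    (equivExterior Q).symm β * CliffordAlgebra.ι Q v
      = ((-1 : ℝ)) ^ p • (CliffordAlgebra.ι Q v * (equivExterior Q).symm β
          - (2 : ℝ) • (equivExterior Q).symm (contr Q v β)) := by
  have hinv : involute ((equivExterior Q).symm β) * CliffordAlgebra.ι Q v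
      = CliffordAlgebra.ι Q v * (equivExterior Q).symm β
        - (2 : ℝ) • (equivExterior Q).symm (contr Q v β) := by
    rw [symm_contr]
    rw [eq_sub_iff_add_eq, ← ι_mul_involute]
  have hfix : ((-1 : ℝ)) ^ p • involute ((equivExterior Q).symm β)
      = (equivExterior Q).symm β := by
    rw [involute_symm Q p β hβ, smul_smul, ← pow_add, Even.neg_one_pow ⟨p, by ring⟩, one_smul]
  calc (equivExterior Q).symm β * CliffordAlgebra.ι Q v
      = (((-1 : ℝ)) ^ p • involute ((equivExterior Q).symm β)) * CliffordAlgebra.ι Q v := by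
        rw [hfix]
    _ = ((-1 : ℝ)) ^ p • (involute ((equivExterior Q).symm β) * CliffordAlgebra.ι Q v) := by
        rw [smul_mul_assoc]
    _ = _ := by rw [hinv]

/-- recursion for the Clifford product with a wedge on the right -/
lemma cliffMul_wedge_right (p : ℕ) (β : ExteriorAlgebra ℝ V) (hβ : β ∈ formGrade p)
    (v : V) (α' : ExteriorAlgebra ℝ V) :
    cliffMul Q β (ExteriorAlgebra.ι ℝ v * α')
      = ((-1 : ℝ)) ^ p • (ExteriorAlgebra.ι ℝ v * cliffMul Q β α'
          + contr Q v (cliffMul Q β α') - (2 : ℝ) • cliffMul Q (contr Q v β) α')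
        - cliffMul Q β (contr Q v α') := by
  rw [cliffMul, symm_wedge, mul_sub, map_sub, ← mul_assoc, symm_mul_ι Q p β hβ v,
    smul_mul_assoc, sub_mul, smul_sub, map_sub, map_smul]
  rw [map_smul, smul_mul_assoc, map_smul, mul_assoc, equivExterior_ι_mul]
  rw [cliffMul, cliffMul, cliffMul]
  rw [smul_sub, smul_add]

end cliffmul


section coeffs

/-- the coefficient in the first expansion -/
def cf1 (n q : ℕ) : ℝ := ((-1 : ℝ)) ^ (n * (q - n) + n / 2) / (n.factorial : ℝ)

/-- the coefficient in the second expansion -/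
def cf2 (n q : ℕ) : ℝ := ((-1 : ℝ)) ^ (n * (q - n + 1) + n / 2) / (n.factorial : ℝ)

lemma neg_one_pow_congr_mod {a b : ℕ} (h : a % 2 = b % 2) : ((-1 : ℝ)) ^ a = (-1) ^ b := by
  rw [neg_one_pow_eq_pow_mod_two, h, ← neg_one_pow_eq_pow_mod_two]

lemma cf1_succ {n k : ℕ} (h : n ≤ k) : cf1 n (k + 1) * ((-1 : ℝ)) ^ n = cf1 n k := by
  unfold cf1
  rw [div_mul_eq_mul_div, ← pow_add]
  congr 1
  apply neg_one_pow_congr_mod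
  obtain ⟨s, rfl⟩ : ∃ s, k = n + s := ⟨k - n, by omega⟩
  have h1 : n + s + 1 - n = s + 1 := by omega
  have h2 : n + s - n = s := by omega
  rw [h1, h2]
  simp only [Nat.mul_add, Nat.mul_succ, Nat.mul_one, Nat.add_mul, Nat.one_mul]
  set t := n * s with ht
  omega

lemma cf2_succ {n k : ℕ} (h : n ≤ k) : cf2 n (k + 1) * ((-1 : ℝ)) ^ n = cf2 n k := by
  unfold cf2
  rw [div_mul_eq_mul_div, ← pow_add]
  congr 1
  apply neg_one_pow_congr_mod
  obtain ⟨s, rfl⟩ : ∃ s, k = n + s := ⟨k - n, by omega⟩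
  have h1 : n + s + 1 - n = s + 1 := by omega
  have h2 : n + s - n = s := by omega
  rw [h1, h2]
  simp only [Nat.mul_add, Nat.mul_succ, Nat.mul_one, Nat.add_mul, Nat.one_mul]
  set t := n * s with ht
  omega

lemma cf1_shift {m k : ℕ} (h : m ≤ k) :
    cf1 (m + 1) (k + 1) * (((m : ℝ)) + 1) = ((-1 : ℝ)) ^ k * cf1 m k := by
  unfold cf1
  have hfac : (((m + 1).factorial : ℕ) : ℝ) = (((m : ℝ)) + 1) * ((m.factorial : ℕ) : ℝ) := by
    rw [Nat.factorial_succ]; push_cast; ring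
  have hm0 : ((m : ℝ)) + 1 ≠ 0 := by positivity
  have hf0 : ((m.factorial : ℕ) : ℝ) ≠ 0 := by
    exact_mod_cast Nat.cast_ne_zero.mpr (Nat.factorial_ne_zero m)
  have hdiv : ((-1 : ℝ)) ^ ((m + 1) * (k + 1 - (m + 1)) + (m + 1) / 2)
        / (((m + 1).factorial : ℕ) : ℝ) * (((m : ℝ)) + 1)
      = ((-1 : ℝ)) ^ ((m + 1) * (k + 1 - (m + 1)) + (m + 1) / 2)
        / ((m.factorial : ℕ) : ℝ) := by
    rw [hfac]; field_simp
  rw [hdiv]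
  have hmr : ((-1 : ℝ)) ^ k * (((-1 : ℝ)) ^ (m * (k - m) + m / 2) / ((m.factorial : ℕ) : ℝ))
      = ((-1 : ℝ)) ^ (k + (m * (k - m) + m / 2)) / ((m.factorial : ℕ) : ℝ) := by
    rw [pow_add]; ring
  rw [hmr]
  congr 1
  apply neg_one_pow_congr_mod
  obtain ⟨s, rfl⟩ : ∃ s, k = m + s := ⟨k - m, by omega⟩
  have h1 : m + s + 1 - (m + 1) = s := by omega
  have h2 : m + s - m = s := by omega
  rw [h1, h2]
  simp only [Nat.mul_add, Nat.mul_succ, Nat.mul_one, Nat.add_mul, Nat.one_mul]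
  set t := m * s with ht
  omega

lemma cf2_shift {m k : ℕ} (h : m ≤ k) :
    cf2 (m + 1) (k + 1) * (((m : ℝ)) + 1) = ((-1 : ℝ)) ^ (k + 1) * cf2 m k := by
  unfold cf2
  have hfac : (((m + 1).factorial : ℕ) : ℝ) = (((m : ℝ)) + 1) * ((m.factorial : ℕ) : ℝ) := by
    rw [Nat.factorial_succ]; push_cast; ring
  have hm0 : ((m : ℝ)) + 1 ≠ 0 := by positivity
  have hf0 : ((m.factorial : ℕ) : ℝ) ≠ 0 := by
    exact_mod_cast Nat.cast_ne_zero.mpr (Nat.factorial_ne_zero m)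
  have hdiv : ((-1 : ℝ)) ^ ((m + 1) * (k + 1 - (m + 1) + 1) + (m + 1) / 2)
        / (((m + 1).factorial : ℕ) : ℝ) * (((m : ℝ)) + 1)
      = ((-1 : ℝ)) ^ ((m + 1) * (k + 1 - (m + 1) + 1) + (m + 1) / 2)
        / ((m.factorial : ℕ) : ℝ) := by
    rw [hfac]; field_simp
  rw [hdiv]
  have hmr : ((-1 : ℝ)) ^ (k + 1)
        * (((-1 : ℝ)) ^ (m * (k - m + 1) + m / 2) / ((m.factorial : ℕ) : ℝ))
      = ((-1 : ℝ)) ^ ((k + 1) + (m * (k - m + 1) + m / 2)) / ((m.factorial : ℕ) : ℝ) := by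
    rw [pow_add]; ring
  rw [hmr]
  congr 1
  apply neg_one_pow_congr_mod
  obtain ⟨s, rfl⟩ : ∃ s, k = m + s := ⟨k - m, by omega⟩
  have h1 : m + s + 1 - (m + 1) + 1 = s + 1 := by omega
  have h2 : m + s - m = s := by omega
  rw [h1, h2]
  simp only [Nat.mul_add, Nat.mul_succ, Nat.mul_one, Nat.add_mul, Nat.one_mul]
  set t := m * s with ht
  omega

lemma cf1_zero_zero : cf1 0 0 = 1 := by norm_num [cf1]
lemma cf2_zero_zero : cf2 0 0 = 1 := by norm_num [cf2]

end coeffs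


section mainthm
variable (Q : QuadraticForm ℝ V) (Xl Xu : ι → V)

/-- contraction of a coefficient sum of contracted wedges -/
lemma contr_sum_cw (c : ℕ → ℝ) (N k : ℕ) (v : V) (α' β : ExteriorAlgebra ℝ V)
    (hα' : α' ∈ formGrade k) :
    contr Q v (∑ m ∈ Finset.range N, c m • cwedge Q Xl Xu m α' β)
      = ∑ m ∈ Finset.range N, (c m * ((-1 : ℝ)) ^ m) •
            cwedge Q Xl Xu m (contr Q v α') β
        + ((-1 : ℝ)) ^ k • ∑ m ∈ Finset.range N, c m •
            cwedge Q Xl Xu m α' (contr Q v β) := by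
  rw [map_sum, Finset.smul_sum, ← Finset.sum_add_distrib]
  refine Finset.sum_congr rfl fun m _ => ?_
  rw [map_smul, contr_cwedge Q Xl Xu v m k α' hα' β]
  module

/-- expansion of the target sum for the first identity -/
lemma sum_expand1 (hX : DualFrames Q Xl Xu) (k : ℕ) (v : V)
    (α' β : ExteriorAlgebra ℝ V) (hα' : α' ∈ formGrade k) :
    ∑ n ∈ Finset.range (k + 2), cf1 n (k + 1) •
        cwedge Q Xl Xu n (ExteriorAlgebra.ι ℝ v * α') β
      = ExteriorAlgebra.ι ℝ v * (∑ m ∈ Finset.range (k + 1), cf1 m k • cwedge Q Xl Xu m α' β)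
        + ((-1 : ℝ)) ^ k • ∑ m ∈ Finset.range (k + 1), cf1 m k •
            cwedge Q Xl Xu m α' (contr Q v β) := by
  rw [Finset.sum_range_succ']
  have hterm : ∀ m ∈ Finset.range (k + 1),
      cf1 (m + 1) (k + 1) • cwedge Q Xl Xu (m + 1) (ExteriorAlgebra.ι ℝ v * α') β
      = (cf1 (m + 1) (k + 1) * ((-1 : ℝ)) ^ (m + 1)) •
          (ExteriorAlgebra.ι ℝ v * cwedge Q Xl Xu (m + 1) α' β)
        + (((-1 : ℝ)) ^ k * cf1 m k) • cwedge Q Xl Xu m α' (contr Q v β) := by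
    intro m hm
    rw [cwedge_wedge Q Xl Xu hX v m α' β, smul_add, smul_smul, smul_smul,
      cf1_shift (Nat.lt_succ_iff.mp (Finset.mem_range.mp hm))]
  rw [Finset.sum_congr rfl hterm, Finset.sum_add_distrib]
  have hX0 : cf1 0 (k + 1) • cwedge Q Xl Xu 0 (ExteriorAlgebra.ι ℝ v * α') β
      = (cf1 0 (k + 1) * ((-1 : ℝ)) ^ 0) •
          (ExteriorAlgebra.ι ℝ v * cwedge Q Xl Xu 0 α' β) := by
    rw [cwedge_wedge_zero, pow_zero, mul_one]
  rw [hX0, add_right_comm]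
  have hback := Finset.sum_range_succ' (fun n => (cf1 n (k + 1) * ((-1 : ℝ)) ^ n) •
    (ExteriorAlgebra.ι ℝ v * cwedge Q Xl Xu n α' β)) (k + 1)
  rw [← hback, Finset.sum_range_succ,
    cwedge_eq_zero Q Xl Xu (k + 1) k (Nat.lt_succ_self k) α' hα' β, mul_zero, smul_zero,
    add_zero]
  have hfam : ∀ n ∈ Finset.range (k + 1),
      (cf1 n (k + 1) * ((-1 : ℝ)) ^ n) • (ExteriorAlgebra.ι ℝ v * cwedge Q Xl Xu n α' β)
      = cf1 n k • (ExteriorAlgebra.ι ℝ v * cwedge Q Xl Xu n α' β) := by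
    intro n hn
    rw [cf1_succ (Nat.lt_succ_iff.mp (Finset.mem_range.mp hn))]
  rw [Finset.sum_congr rfl hfam, Finset.mul_sum]
  have hmul : ∀ n ∈ Finset.range (k + 1),
      ExteriorAlgebra.ι ℝ v * (cf1 n k • cwedge Q Xl Xu n α' β)
      = cf1 n k • (ExteriorAlgebra.ι ℝ v * cwedge Q Xl Xu n α' β) := fun n _ =>
    mul_smul_comm _ _ _
  rw [Finset.sum_congr rfl hmul, Finset.smul_sum]
  have hZ : ∀ m ∈ Finset.range (k + 1),
      (((-1 : ℝ)) ^ k * cf1 m k) • cwedge Q Xl Xu m α' (contr Q v β)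
      = ((-1 : ℝ)) ^ k • cf1 m k • cwedge Q Xl Xu m α' (contr Q v β) := fun m _ =>
    (smul_smul _ _ _).symm
  rw [Finset.sum_congr rfl hZ]

/-- expansion of the target sum for the second identity -/
lemma sum_expand2 (hX : DualFrames Q Xl Xu) (k : ℕ) (v : V)
    (α' β : ExteriorAlgebra ℝ V) (hα' : α' ∈ formGrade k) :
    ∑ n ∈ Finset.range (k + 2), cf2 n (k + 1) •
        cwedge Q Xl Xu n (ExteriorAlgebra.ι ℝ v * α') β
      = ExteriorAlgebra.ι ℝ v * (∑ m ∈ Finset.range (k + 1), cf2 m k • cwedge Q Xl Xu m α' β)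
        + ((-1 : ℝ)) ^ (k + 1) • ∑ m ∈ Finset.range (k + 1), cf2 m k •
            cwedge Q Xl Xu m α' (contr Q v β) := by
  rw [Finset.sum_range_succ']
  have hterm : ∀ m ∈ Finset.range (k + 1),
      cf2 (m + 1) (k + 1) • cwedge Q Xl Xu (m + 1) (ExteriorAlgebra.ι ℝ v * α') β
      = (cf2 (m + 1) (k + 1) * ((-1 : ℝ)) ^ (m + 1)) •
          (ExteriorAlgebra.ι ℝ v * cwedge Q Xl Xu (m + 1) α' β)
        + (((-1 : ℝ)) ^ (k + 1) * cf2 m k) • cwedge Q Xl Xu m α' (contr Q v β) := by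
    intro m hm
    rw [cwedge_wedge Q Xl Xu hX v m α' β, smul_add, smul_smul, smul_smul,
      cf2_shift (Nat.lt_succ_iff.mp (Finset.mem_range.mp hm))]
  rw [Finset.sum_congr rfl hterm, Finset.sum_add_distrib]
  have hX0 : cf2 0 (k + 1) • cwedge Q Xl Xu 0 (ExteriorAlgebra.ι ℝ v * α') β
      = (cf2 0 (k + 1) * ((-1 : ℝ)) ^ 0) •
          (ExteriorAlgebra.ι ℝ v * cwedge Q Xl Xu 0 α' β) := by
    rw [cwedge_wedge_zero, pow_zero, mul_one]
  rw [hX0, add_right_comm]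
  have hback := Finset.sum_range_succ' (fun n => (cf2 n (k + 1) * ((-1 : ℝ)) ^ n) •
    (ExteriorAlgebra.ι ℝ v * cwedge Q Xl Xu n α' β)) (k + 1)
  rw [← hback, Finset.sum_range_succ,
    cwedge_eq_zero Q Xl Xu (k + 1) k (Nat.lt_succ_self k) α' hα' β, mul_zero, smul_zero,
    add_zero]
  have hfam : ∀ n ∈ Finset.range (k + 1),
      (cf2 n (k + 1) * ((-1 : ℝ)) ^ n) • (ExteriorAlgebra.ι ℝ v * cwedge Q Xl Xu n α' β)
      = cf2 n k • (ExteriorAlgebra.ι ℝ v * cwedge Q Xl Xu n α' β) := by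
    intro n hn
    rw [cf2_succ (Nat.lt_succ_iff.mp (Finset.mem_range.mp hn))]
  rw [Finset.sum_congr rfl hfam, Finset.mul_sum]
  have hmul : ∀ n ∈ Finset.range (k + 1),
      ExteriorAlgebra.ι ℝ v * (cf2 n k • cwedge Q Xl Xu n α' β)
      = cf2 n k • (ExteriorAlgebra.ι ℝ v * cwedge Q Xl Xu n α' β) := fun n _ =>
    mul_smul_comm _ _ _
  rw [Finset.sum_congr rfl hmul, Finset.smul_sum]
  have hZ : ∀ m ∈ Finset.range (k + 1),
      (((-1 : ℝ)) ^ (k + 1) * cf2 m k) • cwedge Q Xl Xu m α' (contr Q v β)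
      = ((-1 : ℝ)) ^ (k + 1) • cf2 m k • cwedge Q Xl Xu m α' (contr Q v β) := fun m _ =>
    (smul_smul _ _ _).symm
  rw [Finset.sum_congr rfl hZ]

end mainthm


section final
variable (Q : QuadraticForm ℝ V) (Xl Xu : ι → V)

theorem main_expansion (hX : DualFrames Q Xl Xu) :
    ∀ q p : ℕ, q ≤ p → ∀ α ∈ formGrade (V := V) q, ∀ β ∈ formGrade (V := V) p,
      cliffMul Q α β = ∑ n ∈ Finset.range (q + 1), cf1 n q • cwedge Q Xl Xu n α β
      ∧ cliffMul Q β α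
          = ((-1 : ℝ)) ^ (p * q) • ∑ n ∈ Finset.range (q + 1), cf2 n q •
              cwedge Q Xl Xu n α β := by
  intro q
  induction q using Nat.strong_induction_on with
  | _ q ih =>
  match q with
  | 0 =>
    intro p hqp α hα β hβ
    rw [formGrade, pow_zero, Submodule.mem_one] at hα
    obtain ⟨r, rfl⟩ := hα
    constructor
    · rw [cliffMul_algebraMap_left, Finset.sum_range_one, cf1_zero_zero, one_smul,
        cwedge_zero, ← Algebra.smul_def]
    · rw [cliffMul_algebraMap_right, Nat.mul_zero, pow_zero, one_smul,
        Finset.sum_range_one, cf2_zero_zero, one_smul, cwedge_zero, ← Algebra.smul_def]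
  | (k + 1) =>
    intro p hqp α hα β hβ
    rw [formGrade, pow_succ'] at hα
    refine Submodule.mul_induction_on hα ?_ ?_
    · rintro m ⟨v, rfl⟩ α' hα'raw
      obtain ⟨p', rfl⟩ : ∃ p', p = p' + 1 := ⟨p - 1, by omega⟩
      have hα' : α' ∈ formGrade (V := V) k := by rw [formGrade]; exact hα'raw
      have hcvβ : contr Q v β ∈ formGrade (V := V) p' := contr_grade Q v β hβ
      -- inductive hypotheses
      have ihk := ih k (Nat.lt_succ_self k) (p' + 1) (by omega) α' hα' β hβ
      have IH1 := ihk.1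
      have IH2a := ihk.2
      have ihkp' := ih k (Nat.lt_succ_self k) p' (by omega) α' hα' (contr Q v β) hcvβ
      have IH2braw := ihkp'.2
      -- normalize the sign of IH2b
      have IH2b : cliffMul Q (contr Q v β) α'
          = ((-1 : ℝ)) ^ ((p' + 1) * k + k) • ∑ m ∈ Finset.range (k + 1), cf2 m k •
              cwedge Q Xl Xu m α' (contr Q v β) := by
        rw [IH2braw]
        congr 1
        apply neg_one_pow_congr_mod
        have : (p' + 1) * k + k = p' * k + 2 * k := by ring
        rw [this]
        generalize p' * k = t
        omega
      -- the two auxiliary expansions of products against `contr Q v α'`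
      have IHc1 : cliffMul Q (contr Q v α') β
          = ∑ m ∈ Finset.range (k + 1), (cf1 m k * ((-1 : ℝ)) ^ m) •
              cwedge Q Xl Xu m (contr Q v α') β := by
        match k, hα' with
        | 0, hα' =>
          rw [contr_grade_zero Q v α' hα', cliffMul_zero_left]
          rw [Finset.sum_congr rfl fun m _ => by
            rw [cwedge_zero_left Q Xl Xu m β, smul_zero]]
          rw [Finset.sum_const_zero]
        | (k' + 1), hα' =>
          have hc : contr Q v α' ∈ formGrade (V := V) k' := contr_grade Q v α' hα'
          have := (ih k' (by omega) (p' + 1) (by omega) (contr Q v α') hc β hβ).1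
          rw [this]
          conv_rhs => rw [Finset.sum_range_succ]
          rw [cwedge_eq_zero Q Xl Xu (k' + 1) k' (Nat.lt_succ_self k') _ hc β, smul_zero,
            add_zero]
          exact (Finset.sum_congr rfl fun m hm => by
            rw [cf1_succ (Nat.lt_succ_iff.mp (Finset.mem_range.mp hm))]).symm
      have IHc2 : cliffMul Q β (contr Q v α')
          = ((-1 : ℝ)) ^ ((p' + 1) * k + (p' + 1)) •
              ∑ m ∈ Finset.range (k + 1), (cf2 m k * ((-1 : ℝ)) ^ m) •
                cwedge Q Xl Xu m (contr Q v α') β := by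
        match k, hα' with
        | 0, hα' =>
          rw [contr_grade_zero Q v α' hα', cliffMul_zero_right]
          rw [Finset.sum_congr rfl fun m _ => by
            rw [cwedge_zero_left Q Xl Xu m β, smul_zero]]
          rw [Finset.sum_const_zero, smul_zero]
        | (k' + 1), hα' =>
          have hc : contr Q v α' ∈ formGrade (V := V) k' := contr_grade Q v α' hα'
          have h2 := (ih k' (by omega) (p' + 1) (by omega) (contr Q v α') hc β hβ).2
          rw [h2]
          have hsum : ∑ m ∈ Finset.range (k' + 1 + 1), (cf2 m (k' + 1) * ((-1 : ℝ)) ^ m) •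
                cwedge Q Xl Xu m (contr Q v α') β
              = ∑ m ∈ Finset.range (k' + 1), cf2 m k' •
                cwedge Q Xl Xu m (contr Q v α') β := by
            rw [Finset.sum_range_succ,
              cwedge_eq_zero Q Xl Xu (k' + 1) k' (Nat.lt_succ_self k') _ hc β, smul_zero,
              add_zero]
            exact Finset.sum_congr rfl fun m hm => by
              rw [cf2_succ (Nat.lt_succ_iff.mp (Finset.mem_range.mp hm))]
          rw [hsum]
          congr 1
          apply neg_one_pow_congr_mod
          have : (p' + 1) * (k' + 1) + (p' + 1) = (p' + 1) * k' + 2 * (p' + 1) := by ring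
          rw [this]
          generalize (p' + 1) * k' = t
          omega
      constructor
      · -- first identity
        rw [cliffMul_wedge_left, IH1, IHc1,
          contr_sum_cw Q Xl Xu (fun m => cf1 m k) (k + 1) k v α' β hα',
          sum_expand1 Q Xl Xu hX k v α' β hα']
        abel
      · -- second identity
        rw [cliffMul_wedge_right Q (p' + 1) β hβ v α', IH2a, IH2b, IHc2,
          map_smul, contr_sum_cw Q Xl Xu (fun m => cf2 m k) (k + 1) k v α' β hα']
        have hexp : (p' + 1) * (k + 1) = (p' + 1) * k + (p' + 1) := by ring
        rw [hexp, sum_expand2 Q Xl Xu hX k v α' β hα']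
        rw [mul_smul_comm]
        simp only [pow_add, pow_succ, pow_zero]
        module
    · intro x y hx hy
      constructor
      · rw [cliffMul_add_left, hx.1, hy.1, ← Finset.sum_add_distrib]
        exact Finset.sum_congr rfl fun m _ => by rw [cwedge_add_left, smul_add]
      · rw [cliffMul_add_right, hx.2, hy.2, ← smul_add, ← Finset.sum_add_distrib]
        congr 1
        exact Finset.sum_congr rfl fun m _ => by rw [cwedge_add_left, smul_add]

end final


end machinery

/-- for a `q`-form `α` and a `p`-form `β` with `q ≤ p`,
`αβ = Σ_{n=0}^{q} ((-1)^{n(q-n)+⌊n/2⌋}/n!) α∧ₙβ` and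
`βα = (-1)^{pq} Σ_{n=0}^{q} ((-1)^{n(q-n+1)+⌊n/2⌋}/n!) α∧ₙβ`. -/
theorem clifford_product_expansion (Q : QuadraticForm ℝ V) (Xl Xu : ι → V)
    (hX : DualFrames Q Xl Xu) (p q : ℕ) (hqp : q ≤ p)
    (α β : ExteriorAlgebra ℝ V) (hα : α ∈ formGrade q) (hβ : β ∈ formGrade p) :
    cliffMul Q α β
        = ∑ n ∈ Finset.range (q + 1),
            (((-1 : ℝ)) ^ (n * (q - n) + n / 2) / (n.factorial : ℝ)) •
              cwedge Q Xl Xu n α β ∧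
    cliffMul Q β α
        = ((-1 : ℝ)) ^ (p * q) • ∑ n ∈ Finset.range (q + 1),
            (((-1 : ℝ)) ^ (n * (q - n + 1) + n / 2) / (n.factorial : ℝ)) •
              cwedge Q Xl Xu n α β := by
  have h := main_expansion Q Xl Xu hX q p hqp α hα β hβ
  unfold cf1 cf2 at h
  exact h
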